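/- arXiv:1508.01720 — 5 statements merged into one kernel-verified Lean document; each statement's English description precedes it below -/
import Mathlib

section
/- Let N ∈ ℕ and C ≥ 2. Let p_1,…,p_C ≥ 0 and p̃_1,…,p̃_C > 0 be reals, let G_1,…,G_C and G̃_1,…,G̃_C be positive definite real N×N matrices, and for every ordered pair (i,j) with i ≠ j let α_ij > 0 be such that the matrix M_ij := G_i⁻¹ + α_ij·G̃_j⁻¹ − α_ij·G̃_i⁻¹ is positive definite. Then Σ_{i=1}^C p_i · ∫_{ℝ^N} g_{G_i}(y) · 1{∃ j ≠ i : p̃_j·g_{G̃_j}(y) ≥ p̃_i·g_{G̃_i}(y)} dy ≤ Σ_{i=1}^C p_i · Σ_{j ≠ i} (p̃_j/p̃_i)^{α_ij} · (det G̃_i / det G̃_j)^{α_ij/2} · (det G_i · det M_ij)^{−1/2}. -/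
open MeasureTheory Matrix Real

variable {N : ℕ}

lemma exp_dot_eq (x : Fin N → ℝ) :
    Real.exp (-(1 / 2) * (x ⬝ᵥ x)) = ∏ i, Real.exp (-(1/2 : ℝ) * x i ^ 2) := by
  rw [← Real.exp_sum]
  congr 1
  rw [dotProduct, Finset.mul_sum]
  exact Finset.sum_congr rfl fun i _ => by ring

lemma std_gauss_integrable :
    Integrable (fun x : Fin N → ℝ => Real.exp (-(1 / 2) * (x ⬝ᵥ x))) := by
  simp only [exp_dot_eq]
  exact Integrable.fintype_prod fun i => integrable_exp_neg_mul_sq (by norm_num : (0:ℝ) < 1/2)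

lemma std_gauss_integral :
    ∫ x : Fin N → ℝ, Real.exp (-(1 / 2) * (x ⬝ᵥ x)) = (2 * π) ^ ((N : ℝ) / 2) := by
  simp only [exp_dot_eq]
  rw [integral_fintype_prod_volume_eq_pow (ι := Fin N) (fun v : ℝ => Real.exp (-(1/2:ℝ) * v ^ 2)),
    integral_gaussian]
  rw [show Real.sqrt (π / (1/2)) = Real.sqrt (2 * π) by norm_num [mul_comm],
    Real.sqrt_eq_rpow, Fintype.card_fin, ← Real.rpow_natCast ((2*π) ^ ((1:ℝ)/2)) N,
    ← Real.rpow_mul (by positivity)]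
  ring_nf

open scoped MatrixOrder in
lemma gauss_quad {M : Matrix (Fin N) (Fin N) ℝ} (hM : M.PosDef) :
    Integrable (fun y : Fin N → ℝ => Real.exp (-(1/2) * (y ⬝ᵥ M *ᵥ y))) ∧
    ∫ y : Fin N → ℝ, Real.exp (-(1/2) * (y ⬝ᵥ M *ᵥ y))
      = (2*π) ^ ((N:ℝ)/2) * M.det ^ (-(1:ℝ)/2) := by
  classical
  set S := CFC.sqrt M with hS
  have hSS : S * S = M := CFC.sqrt_mul_sqrt_self M hM.posSemidef.nonneg
  have hSsymm : Sᵀ = S := by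
    have h1 := (CFC.sqrt_nonneg M).posSemidef.isHermitian
    rwa [Matrix.IsHermitian, Matrix.conjTranspose_eq_transpose_of_trivial] at h1
  have hdet2 : |S.det| * |S.det| = M.det := by
    rw [← abs_mul, ← Matrix.det_mul, hSS, abs_of_pos hM.det_pos]
  have hdet_pos : 0 < |S.det| := by
    rcases (abs_nonneg S.det).lt_or_eq with h | h
    · exact h
    · exfalso; rw [← h, mul_zero] at hdet2; exact hM.det_pos.ne' hdet2.symm
  -- note: hdet2 gives 0 = M.det when |S.det| = 0
  -- quadratic identity
  have hq : ∀ y : Fin N → ℝ, y ⬝ᵥ M *ᵥ y = (S *ᵥ y) ⬝ᵥ (S *ᵥ y) := by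
    intro y
    conv_lhs => rw [← hSS]
    rw [← Matrix.mulVec_mulVec, Matrix.dotProduct_mulVec, ← Matrix.vecMul_transpose, hSsymm]
  -- linear map and its determinant
  set f : (Fin N → ℝ) →ₗ[ℝ] (Fin N → ℝ) := Matrix.toLin' S with hf
  have hSdet_ne : S.det ≠ 0 := by
    intro h; rw [h, abs_zero] at hdet_pos; exact lt_irrefl 0 hdet_pos
  have hfdet : LinearMap.det f ≠ 0 := by
    show LinearMap.det (Matrix.toLin' S) ≠ 0
    rw [LinearMap.det_toLin']; exact hSdet_ne
  have hfapp : ∀ y, f y = S *ᵥ y := fun y => Matrix.toLin'_apply S y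
  have hmap : Measure.map f volume = ENNReal.ofReal |S.det|⁻¹ • volume := by
    rw [Measure.map_linearMap_addHaar_pi_eq_smul_addHaar hfdet volume]
    congr 1
    show ENNReal.ofReal |(LinearMap.det (Matrix.toLin' S))⁻¹| = _
    rw [LinearMap.det_toLin', abs_inv]
  -- continuity of the standard gaussian
  have hgcont : Continuous (fun x : Fin N → ℝ => Real.exp (-(1/2) * (x ⬝ᵥ x))) := by
    apply Real.continuous_exp.comp
    apply Continuous.mul continuous_const
    exact continuous_finset_sum _ fun i _ => (continuous_apply i).mul (continuous_apply i)
  -- measurable embedding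
  have hemb : MeasurableEmbedding (⇑f) :=
    (LinearMap.equivOfDetNeZero f hfdet).toContinuousLinearEquiv.toHomeomorph.measurableEmbedding
  have hcomp : (fun y : Fin N → ℝ => Real.exp (-(1/2) * (y ⬝ᵥ M *ᵥ y)))
      = (fun x : Fin N → ℝ => Real.exp (-(1/2) * (x ⬝ᵥ x))) ∘ f := by
    funext y; simp [hq y, hfapp]
  clear_value S
  have hne : (ENNReal.ofReal |S.det|⁻¹) ≠ 0 := by
    simp only [ne_eq, ENNReal.ofReal_eq_zero, not_le, inv_pos]
    exact hdet_pos
  constructor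
  · rw [hcomp, ← hemb.integrable_map_iff, hmap,
      integrable_smul_measure hne ENNReal.ofReal_ne_top]
    exact std_gauss_integrable
  · rw [hcomp]
    have h1 : ∫ x, ((fun x : Fin N → ℝ => Real.exp (-(1/2) * (x ⬝ᵥ x))) ∘ f) x
        = ∫ x, Real.exp (-(1/2) * (x ⬝ᵥ x)) ∂(Measure.map f volume) := by
      rw [integral_map hemb.measurable.aemeasurable hgcont.aestronglyMeasurable]
      rfl
    rw [h1, hmap, integral_smul_measure, std_gauss_integral,
      ENNReal.toReal_ofReal (by positivity)]
    have hMdet : M.det ^ (-(1:ℝ)/2) = |S.det|⁻¹ := by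
      rw [← hdet2,
        show |S.det| * |S.det| = |S.det| ^ (2:ℝ) by
          rw [show ((2:ℝ)) = ((2:ℕ):ℝ) by norm_num, Real.rpow_natCast]; ring,
        ← Real.rpow_mul (abs_nonneg _)]
      norm_num [Real.rpow_neg_one]
    rw [hMdet, smul_eq_mul, mul_comm]


/-- The centered Gaussian density on `ℝ^N` with covariance matrix `G`:
`g_G(y) = (2π)^{-N/2} (det G)^{-1/2} exp(-(1/2) yᵀ G⁻¹ y)`. -/
noncomputable def gaussDensity {N : ℕ} (G : Matrix (Fin N) (Fin N) ℝ)
    (y : Fin N → ℝ) : ℝ :=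
  (2 * Real.pi) ^ (-(N : ℝ) / 2) * G.det ^ (-(1 : ℝ) / 2) *
    Real.exp (-(1 / 2) * (y ⬝ᵥ G⁻¹ *ᵥ y))

lemma gaussDensity_pos {G : Matrix (Fin N) (Fin N) ℝ} (hG : G.PosDef) (y : Fin N → ℝ) :
    0 < gaussDensity G y := by
  unfold gaussDensity
  have h1 : (0:ℝ) < 2 * π := by positivity
  have h2 := hG.det_pos
  positivity

lemma log_gaussDensity {G : Matrix (Fin N) (Fin N) ℝ} (hG : G.PosDef) (y : Fin N → ℝ) :
    Real.log (gaussDensity G y)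
      = (-(N:ℝ)/2) * Real.log (2 * π) + (-(1:ℝ)/2) * Real.log G.det
        + (-(1/2) * (y ⬝ᵥ G⁻¹ *ᵥ y)) := by
  unfold gaussDensity
  have h1 : (0:ℝ) < 2 * π := by positivity
  have h2 := hG.det_pos
  rw [Real.log_mul (by positivity) (Real.exp_pos _).ne', Real.log_mul (by positivity) (by positivity),
    Real.log_rpow h1, Real.log_rpow h2, Real.log_exp]

lemma quad_expand (A B D : Matrix (Fin N) (Fin N) ℝ) (a : ℝ) (y : Fin N → ℝ) :
    y ⬝ᵥ (A + a • B - a • D) *ᵥ y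
      = y ⬝ᵥ A *ᵥ y + a * (y ⬝ᵥ B *ᵥ y) - a * (y ⬝ᵥ D *ᵥ y) := by
  rw [Matrix.sub_mulVec, Matrix.add_mulVec, Matrix.smul_mulVec, Matrix.smul_mulVec,
    dotProduct_sub, dotProduct_add, dotProduct_smul, dotProduct_smul]
  simp [smul_eq_mul]

lemma point_id {Gi Gti Gtj : Matrix (Fin N) (Fin N) ℝ} (hGi : Gi.PosDef) (hGti : Gti.PosDef)
    (hGtj : Gtj.PosDef) {pti ptj a : ℝ} (hpti : 0 < pti) (hptj : 0 < ptj) (ha : 0 < a)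
    (y : Fin N → ℝ) :
    gaussDensity Gi y * ((ptj * gaussDensity Gtj y) / (pti * gaussDensity Gti y)) ^ a
      = (ptj / pti) ^ a * (Gti.det / Gtj.det) ^ (a / 2)
          * ((2 * π) ^ (-(N:ℝ)/2) * Gi.det ^ (-(1:ℝ)/2))
          * Real.exp (-(1/2) * (y ⬝ᵥ (Gi⁻¹ + a • Gtj⁻¹ - a • Gti⁻¹) *ᵥ y)) := by
  have hgi := gaussDensity_pos hGi y
  have hgti := gaussDensity_pos hGti y
  have hgtj := gaussDensity_pos hGtj y
  have h2π : (0:ℝ) < 2 * π := by positivity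
  have hL : 0 < gaussDensity Gi y * ((ptj * gaussDensity Gtj y) / (pti * gaussDensity Gti y)) ^ a := by
    positivity
  have hR : 0 < (ptj / pti) ^ a * (Gti.det / Gtj.det) ^ (a / 2)
      * ((2 * π) ^ (-(N:ℝ)/2) * Gi.det ^ (-(1:ℝ)/2))
      * Real.exp (-(1/2) * (y ⬝ᵥ (Gi⁻¹ + a • Gtj⁻¹ - a • Gti⁻¹) *ᵥ y)) := by
    have := hGi.det_pos; have := hGti.det_pos; have := hGtj.det_pos
    positivity
  have hdi := hGi.det_pos
  have hdti := hGti.det_pos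
  have hdtj := hGtj.det_pos
  have hr : 0 < (ptj * gaussDensity Gtj y) / (pti * gaussDensity Gti y) :=
    div_pos (mul_pos hptj hgtj) (mul_pos hpti hgti)
  have c1 : (0:ℝ) < (ptj / pti) ^ a := Real.rpow_pos_of_pos (div_pos hptj hpti) _
  have c2 : (0:ℝ) < (Gti.det / Gtj.det) ^ (a/2) := Real.rpow_pos_of_pos (div_pos hdti hdtj) _
  have c3 : (0:ℝ) < (2 * π) ^ (-(N:ℝ)/2) := Real.rpow_pos_of_pos h2π _
  have c4 : (0:ℝ) < Gi.det ^ (-(1:ℝ)/2) := Real.rpow_pos_of_pos hdi _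
  rw [← Real.exp_log hL, ← Real.exp_log hR]
  congr 1
  rw [Real.log_mul hgi.ne' (Real.rpow_pos_of_pos hr a).ne', Real.log_rpow hr,
    Real.log_div (mul_pos hptj hgtj).ne' (mul_pos hpti hgti).ne',
    Real.log_mul hptj.ne' hgtj.ne', Real.log_mul hpti.ne' hgti.ne',
    Real.log_mul (mul_pos (mul_pos c1 c2) (mul_pos c3 c4)).ne' (Real.exp_pos _).ne',
    Real.log_mul (mul_pos c1 c2).ne' (mul_pos c3 c4).ne',
    Real.log_mul c1.ne' c2.ne', Real.log_mul c3.ne' c4.ne',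
    Real.log_rpow (div_pos hptj hpti), Real.log_rpow (div_pos hdti hdtj),
    Real.log_rpow h2π, Real.log_rpow hdi, Real.log_exp,
    Real.log_div hptj.ne' hpti.ne', Real.log_div hdti.ne' hdtj.ne',
    log_gaussDensity hGi, log_gaussDensity hGti, log_gaussDensity hGtj, quad_expand]
  ring

/-- Theorem 1 of the paper: Chernoff-type upper bound on the error probability of the
mismatched MAP classifier. Here `G i = Σ_i + σ²I` and `Gt i = Σ̃_i + σ²I`. -/
theorem mismatched_map_error_probability_upper_bound
    (N C : ℕ) (hC : 2 ≤ C)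
    (p : Fin C → ℝ) (hp : ∀ i, 0 ≤ p i)
    (pt : Fin C → ℝ) (hpt : ∀ i, 0 < pt i)
    (G Gt : Fin C → Matrix (Fin N) (Fin N) ℝ)
    (hG : ∀ i, (G i).PosDef) (hGt : ∀ i, (Gt i).PosDef)
    (α : Fin C → Fin C → ℝ)
    (hα : ∀ i j, i ≠ j → 0 < α i j)
    (hM : ∀ i j, i ≠ j →
      ((G i)⁻¹ + α i j • (Gt j)⁻¹ - α i j • (Gt i)⁻¹).PosDef) :
    ∑ i, p i *
        ∫ y : Fin N → ℝ,
          gaussDensity (G i) y *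
            Set.indicator
              {y : Fin N → ℝ | ∃ j, j ≠ i ∧
                pt i * gaussDensity (Gt i) y ≤ pt j * gaussDensity (Gt j) y}
              (fun _ => (1 : ℝ)) y
      ≤ ∑ i, p i *
          ∑ j ∈ Finset.univ.erase i,
            (pt j / pt i) ^ α i j * ((Gt i).det / (Gt j).det) ^ (α i j / 2) *
              ((G i).det *
                  ((G i)⁻¹ + α i j • (Gt j)⁻¹ - α i j • (Gt i)⁻¹).det) ^ (-(1 : ℝ) / 2) := by

  refine Finset.sum_le_sum fun i _ => ?_
  refine mul_le_mul_of_nonneg_left ?_ (hp i)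
  set S : Set (Fin N → ℝ) := {y : Fin N → ℝ | ∃ j, j ≠ i ∧
      pt i * gaussDensity (Gt i) y ≤ pt j * gaussDensity (Gt j) y} with hSdef
  set h : Fin C → (Fin N → ℝ) → ℝ := fun j y =>
    (pt j / pt i) ^ α i j * ((Gt i).det / (Gt j).det) ^ (α i j / 2)
      * ((2 * Real.pi) ^ (-(N:ℝ)/2) * (G i).det ^ (-(1:ℝ)/2))
      * Real.exp (-(1/2) * (y ⬝ᵥ ((G i)⁻¹ + α i j • (Gt j)⁻¹ - α i j • (Gt i)⁻¹) *ᵥ y))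
    with hh
  have h2π : (0:ℝ) < 2 * Real.pi := by positivity
  have hnonneg : ∀ j y, 0 ≤ h j y := by
    intro j y
    have h1 := hpt i; have h2 := hpt j
    have h3 := (hGt i).det_pos; have h4 := (hGt j).det_pos
    have h5 := (hG i).det_pos
    rw [hh]
    positivity
  have hint : ∀ j ∈ Finset.univ.erase i, Integrable (h j) := by
    intro j hj
    have hne : i ≠ j := (Finset.ne_of_mem_erase hj).symm
    exact ((gauss_quad (hM i j hne)).1).const_mul _
  have hbound : ∀ y, gaussDensity (G i) y * Set.indicator S (fun _ => (1:ℝ)) y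
      ≤ ∑ j ∈ Finset.univ.erase i, h j y := by
    intro y
    by_cases hy : y ∈ S
    · rw [Set.indicator_of_mem hy, mul_one]
      obtain ⟨j₀, hj₀ne, hle⟩ := hy
      have hstep : gaussDensity (G i) y ≤ h j₀ y := by
        rw [hh]
        dsimp only
        rw [← point_id (hG i) (hGt i) (hGt j₀) (hpt i) (hpt j₀) (hα i j₀ hj₀ne.symm) y]
        have hr1 : 1 ≤ (pt j₀ * gaussDensity (Gt j₀) y) / (pt i * gaussDensity (Gt i) y) :=
          (one_le_div (mul_pos (hpt i) (gaussDensity_pos (hGt i) y))).2 hle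
        have := Real.one_le_rpow hr1 (hα i j₀ hj₀ne.symm).le
        nlinarith [gaussDensity_pos (hG i) y]
      refine hstep.trans (Finset.single_le_sum (fun j hj => hnonneg j y) ?_)
      exact Finset.mem_erase.2 ⟨hj₀ne, Finset.mem_univ j₀⟩
    · rw [Set.indicator_of_notMem hy, mul_zero]
      exact Finset.sum_nonneg fun j _ => hnonneg j y
  calc ∫ y : Fin N → ℝ, gaussDensity (G i) y * Set.indicator S (fun _ => (1:ℝ)) y
      ≤ ∫ y : Fin N → ℝ, ∑ j ∈ Finset.univ.erase i, h j y := by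
        refine integral_mono_of_nonneg (Filter.Eventually.of_forall fun y => ?_)
          (integrable_finset_sum _ hint) (Filter.Eventually.of_forall hbound)
        exact mul_nonneg (gaussDensity_pos (hG i) y).le
          (Set.indicator_nonneg (fun _ _ => zero_le_one) y)
    _ = ∑ j ∈ Finset.univ.erase i, ∫ y : Fin N → ℝ, h j y := integral_finset_sum _ hint
    _ = ∑ j ∈ Finset.univ.erase i,
          (pt j / pt i) ^ α i j * ((Gt i).det / (Gt j).det) ^ (α i j / 2) *
            ((G i).det *
                ((G i)⁻¹ + α i j • (Gt j)⁻¹ - α i j • (Gt i)⁻¹).det) ^ (-(1 : ℝ) / 2) := by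
        refine Finset.sum_congr rfl fun j hj => ?_
        have hne : i ≠ j := (Finset.ne_of_mem_erase hj).symm
        have hMij := hM i j hne
        rw [hh]
        dsimp only
        rw [MeasureTheory.integral_const_mul, (gauss_quad hMij).2]
        have hdGi := (hG i).det_pos
        have hdM := hMij.det_pos
        have h2 : ((2 * Real.pi) ^ (-(N:ℝ)/2)) * ((2 * Real.pi) ^ ((N:ℝ)/2)) = 1 := by
          rw [← Real.rpow_add h2π, show (-(N:ℝ)/2 + (N:ℝ)/2) = 0 by ring, Real.rpow_zero]
        rw [Real.mul_rpow hdGi.le hdM.le]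
        calc (pt j / pt i) ^ α i j * ((Gt i).det / (Gt j).det) ^ (α i j / 2) *
              ((2 * Real.pi) ^ (-(N:ℝ)/2) * (G i).det ^ (-(1:ℝ)/2)) *
              ((2 * Real.pi) ^ ((N:ℝ)/2) *
                ((G i)⁻¹ + α i j • (Gt j)⁻¹ - α i j • (Gt i)⁻¹).det ^ (-(1:ℝ)/2))
            = (pt j / pt i) ^ α i j * ((Gt i).det / (Gt j).det) ^ (α i j / 2) *
              (((2 * Real.pi) ^ (-(N:ℝ)/2) * (2 * Real.pi) ^ ((N:ℝ)/2)) *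
                ((G i).det ^ (-(1:ℝ)/2) *
                  ((G i)⁻¹ + α i j • (Gt j)⁻¹ - α i j • (Gt i)⁻¹).det ^ (-(1:ℝ)/2))) := by ring
          _ = _ := by rw [h2, one_mul]
end

section
/- Let N ∈ ℕ, let G, H_i, H_j be positive definite real N×N matrices, let p̃_i, p̃_j > 0 and α > 0 be reals, and assume that M := G⁻¹ + α·H_j⁻¹ − α·H_i⁻¹ is positive definite. Then ∫_{ℝ^N} g_G(y) · ( (p̃_j · g_{H_j}(y)) / (p̃_i · g_{H_i}(y)) )^α dy = (p̃_j/p̃_i)^α · (det H_i / det H_j)^{α/2} · (det G · det M)^{−1/2}. -/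
open MeasureTheory Matrix

lemma integral_exp_neg_half_quadratic {N : ℕ} {M : Matrix (Fin N) (Fin N) ℝ} (hM : M.PosDef) :
    ∫ y : Fin N → ℝ, Real.exp (-(1 / 2) * (y ⬝ᵥ M *ᵥ y)) =
      (2 * Real.pi) ^ ((N : ℝ) / 2) * M.det ^ (-(1 : ℝ) / 2) := by
  obtain ⟨S, hSsd, hSS⟩ : ∃ S : Matrix (Fin N) (Fin N) ℝ, S.PosSemidef ∧ S * S = M :=
    open MatrixOrder in ⟨CFC.sqrt M, (CFC.sqrt_nonneg M).posSemidef, CFC.sqrt_mul_sqrt_self M hM.posSemidef.nonneg⟩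
  have hdetS : S.det * S.det = M.det := by rw [← det_mul, hSS]
  have hdetM : 0 < M.det := hM.det_pos
  have hdetSpos : 0 < S.det := by
    have h0 : 0 ≤ S.det := by
      rw [hSsd.isHermitian.det_eq_prod_eigenvalues]
      exact Finset.prod_nonneg fun i _ => hSsd.eigenvalues_nonneg i
    nlinarith
  have hquad : ∀ y : Fin N → ℝ, y ⬝ᵥ M *ᵥ y = ∑ i, (S *ᵥ y) i ^ 2 := by
    intro y
    have h1 : M *ᵥ y = S *ᵥ (S *ᵥ y) := by rw [mulVec_mulVec, hSS]
    have h2 : y ⬝ᵥ S *ᵥ (S *ᵥ y) = (S *ᵥ y) ⬝ᵥ (S *ᵥ y) := by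
      rw [dotProduct_mulVec, ← mulVec_transpose]
      congr 1
      rw [show Sᵀ = S from (by simpa using hSsd.isHermitian : S.IsSymm)]
    rw [h1, h2, dotProduct]
    simp [sq]
  have hT : Continuous (Matrix.toLin' S) := LinearMap.continuous_of_finiteDimensional _
  have hf : Continuous fun x : Fin N → ℝ => Real.exp (-(1 / 2) * ∑ i, x i ^ 2) := by
    fun_prop
  have hmap : Measure.map (Matrix.toLin' S) (volume : Measure (Fin N → ℝ))
      = ENNReal.ofReal |S.det⁻¹| • volume :=
    Real.map_matrix_volume_pi_eq_smul_volume_pi hdetSpos.ne'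
  have key : ∫ y : Fin N → ℝ, Real.exp (-(1 / 2) * (y ⬝ᵥ M *ᵥ y))
      = ∫ y : Fin N → ℝ, (fun x : Fin N → ℝ => Real.exp (-(1 / 2) * ∑ i, x i ^ 2))
          (Matrix.toLin' S y) := by
    congr 1; ext y; simp only [Matrix.toLin'_apply]; rw [hquad]
  rw [key, ← integral_map hT.aemeasurable hf.aestronglyMeasurable, hmap,
    integral_smul_measure]
  have hprod : ∫ x : Fin N → ℝ, Real.exp (-(1 / 2) * ∑ i, x i ^ 2)
      = (∫ t : ℝ, Real.exp (-(1 / 2) * t ^ 2)) ^ N := by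
    have := integral_fintype_prod_eq_pow (ι := Fin N) (μ := volume) (fun t : ℝ => Real.exp (-(1 / 2) * t ^ 2))
    simp only [Fintype.card_fin] at this
    rw [← this]
    congr 1; ext x
    rw [Finset.mul_sum, ← Real.exp_sum]
  rw [hprod, integral_gaussian]
  have h2pi : (0:ℝ) < 2 * Real.pi := by positivity
  have hsq : Real.sqrt (Real.pi / (1/2)) = (2 * Real.pi) ^ ((1:ℝ)/2) := by
    rw [show Real.pi / (1/2) = 2 * Real.pi by ring, Real.sqrt_eq_rpow]
  have hSdet : S.det = M.det ^ ((1:ℝ)/2) := by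
    have : (M.det ^ ((1:ℝ)/2)) * (M.det ^ ((1:ℝ)/2)) = M.det := by
      rw [← Real.rpow_add hdetM]; norm_num
    nlinarith [Real.rpow_pos_of_pos hdetM ((1:ℝ)/2)]
  rw [hsq, ← Real.rpow_natCast ((2*Real.pi) ^ ((1:ℝ)/2)) N, ← Real.rpow_mul h2pi.le]
  rw [ENNReal.toReal_ofReal (abs_nonneg _), abs_of_pos (by positivity), hSdet,
    ← Real.rpow_neg hdetM.le, smul_eq_mul]
  ring

/-- The Gaussian integral evaluation underlying Theorem 1 of the paper: the exponential-moment
bound on the two-class misclassification probability equals this closed form. -/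
theorem gaussian_exponential_moment
    (N : ℕ) (G Hi Hj : Matrix (Fin N) (Fin N) ℝ)
    (hG : G.PosDef) (hHi : Hi.PosDef) (hHj : Hj.PosDef)
    (pti ptj α : ℝ) (hpti : 0 < pti) (hptj : 0 < ptj) (hα : 0 < α)
    (hM : (G⁻¹ + α • Hj⁻¹ - α • Hi⁻¹).PosDef) :
    ∫ y : Fin N → ℝ,
        gaussDensity G y * ((ptj * gaussDensity Hj y) / (pti * gaussDensity Hi y)) ^ α
      = (ptj / pti) ^ α * (Hi.det / Hj.det) ^ (α / 2) *
          (G.det * (G⁻¹ + α • Hj⁻¹ - α • Hi⁻¹).det) ^ (-(1 : ℝ) / 2) := by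
  have hdetG := hG.det_pos
  have hdetHi := hHi.det_pos
  have hdetHj := hHj.det_pos
  have hdetM := hM.det_pos
  have h2pi : (0:ℝ) < 2 * Real.pi := by positivity
  have hpt : (0:ℝ) < ptj / pti := div_pos hptj hpti
  have hdd : (0:ℝ) < Hi.det / Hj.det := div_pos hdetHi hdetHj
  have hpoint : ∀ y : Fin N → ℝ,
      gaussDensity G y * ((ptj * gaussDensity Hj y) / (pti * gaussDensity Hi y)) ^ α
      = ((2 * Real.pi) ^ (-(N:ℝ)/2) * G.det ^ (-(1:ℝ)/2)
          * ((ptj / pti) ^ α * (Hi.det / Hj.det) ^ (α/2)))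
        * Real.exp (-(1/2) * (y ⬝ᵥ (G⁻¹ + α • Hj⁻¹ - α • Hi⁻¹) *ᵥ y)) := by
    intro y
    have hq : y ⬝ᵥ (G⁻¹ + α • Hj⁻¹ - α • Hi⁻¹) *ᵥ y
        = y ⬝ᵥ G⁻¹ *ᵥ y + α * (y ⬝ᵥ Hj⁻¹ *ᵥ y) - α * (y ⬝ᵥ Hi⁻¹ *ᵥ y) := by
      simp [sub_mulVec, add_mulVec, smul_mulVec, dotProduct_add, dotProduct_sub,
        dotProduct_smul, smul_eq_mul]
    unfold gaussDensity
    have hdet2 : Hj.det ^ (-(1:ℝ)/2) / Hi.det ^ (-(1:ℝ)/2) = (Hi.det/Hj.det) ^ ((1:ℝ)/2) := by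
      rw [show (-(1:ℝ)/2) = -(1/2) by ring, Real.rpow_neg hdetHj.le, Real.rpow_neg hdetHi.le,
        Real.div_rpow hdetHi.le hdetHj.le]
      rw [div_eq_mul_inv, inv_inv, mul_comm, ← div_eq_mul_inv]
    have hratio : (ptj * ((2*Real.pi) ^ (-(N:ℝ)/2) * Hj.det ^ (-(1:ℝ)/2)
          * Real.exp (-(1/2) * (y ⬝ᵥ Hj⁻¹ *ᵥ y))))
        / (pti * ((2*Real.pi) ^ (-(N:ℝ)/2) * Hi.det ^ (-(1:ℝ)/2)
          * Real.exp (-(1/2) * (y ⬝ᵥ Hi⁻¹ *ᵥ y))))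
        = (ptj/pti) * ((Hi.det/Hj.det) ^ ((1:ℝ)/2)
          * Real.exp (-(1/2) * (y ⬝ᵥ Hj⁻¹ *ᵥ y) - (-(1/2)) * (y ⬝ᵥ Hi⁻¹ *ᵥ y))) := by
      rw [Real.exp_sub, ← hdet2]
      have e1 : (2*Real.pi) ^ (-(N:ℝ)/2) ≠ 0 := (Real.rpow_pos_of_pos h2pi _).ne'
      have e2 : Hi.det ^ (-(1:ℝ)/2) ≠ 0 := (Real.rpow_pos_of_pos hdetHi _).ne'
      have e3 : Real.exp (-(1/2) * (y ⬝ᵥ Hi⁻¹ *ᵥ y)) ≠ 0 := (Real.exp_pos _).ne'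
      field_simp
    rw [hratio]
    have hrp : ((ptj/pti) * ((Hi.det/Hj.det) ^ ((1:ℝ)/2)
          * Real.exp (-(1/2) * (y ⬝ᵥ Hj⁻¹ *ᵥ y) - (-(1/2)) * (y ⬝ᵥ Hi⁻¹ *ᵥ y)))) ^ α
        = (ptj/pti) ^ α * ((Hi.det/Hj.det) ^ (α/2)
          * Real.exp ((-(1/2) * (y ⬝ᵥ Hj⁻¹ *ᵥ y) - (-(1/2)) * (y ⬝ᵥ Hi⁻¹ *ᵥ y)) * α)) := by
      rw [Real.mul_rpow hpt.le (by positivity), Real.mul_rpow (by positivity) (Real.exp_pos _).le,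
        ← Real.rpow_mul hdd.le, ← Real.exp_mul, show (1:ℝ)/2 * α = α/2 by ring]
    rw [hrp, mul_comm (-(1/2) * (y ⬝ᵥ Hj⁻¹ *ᵥ y) - (-(1/2)) * (y ⬝ᵥ Hi⁻¹ *ᵥ y)) α]
    rw [show (2*Real.pi) ^ (-(N:ℝ)/2) * G.det ^ (-(1:ℝ)/2) * Real.exp (-(1/2) * (y ⬝ᵥ G⁻¹ *ᵥ y))
          * ((ptj/pti) ^ α * ((Hi.det/Hj.det) ^ (α/2)
            * Real.exp (α * (-(1/2) * (y ⬝ᵥ Hj⁻¹ *ᵥ y) - (-(1/2)) * (y ⬝ᵥ Hi⁻¹ *ᵥ y)))))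
        = (2*Real.pi) ^ (-(N:ℝ)/2) * G.det ^ (-(1:ℝ)/2)
            * ((ptj/pti) ^ α * (Hi.det/Hj.det) ^ (α/2))
          * (Real.exp (-(1/2) * (y ⬝ᵥ G⁻¹ *ᵥ y))
            * Real.exp (α * (-(1/2) * (y ⬝ᵥ Hj⁻¹ *ᵥ y) - (-(1/2)) * (y ⬝ᵥ Hi⁻¹ *ᵥ y)))) from by ring]
    rw [← Real.exp_add]
    congr 1
    rw [hq]
    ring
  simp only [hpoint]
  rw [integral_const_mul, integral_exp_neg_half_quadratic hM]
  have hcomb : G.det ^ (-(1:ℝ)/2) * (G⁻¹ + α • Hj⁻¹ - α • Hi⁻¹).det ^ (-(1:ℝ)/2)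
      = (G.det * (G⁻¹ + α • Hj⁻¹ - α • Hi⁻¹).det) ^ (-(1:ℝ)/2) := by
    rw [Real.mul_rpow hdetG.le hdetM.le]
  have hcancel : (2*Real.pi) ^ (-(N:ℝ)/2) * (2*Real.pi) ^ ((N:ℝ)/2) = 1 := by
    rw [← Real.rpow_add h2pi, neg_div, neg_add_cancel, Real.rpow_zero]
  calc (2*Real.pi) ^ (-(N:ℝ)/2) * G.det ^ (-(1:ℝ)/2)
        * ((ptj/pti) ^ α * (Hi.det/Hj.det) ^ (α/2))
        * ((2*Real.pi) ^ ((N:ℝ)/2) * (G⁻¹ + α • Hj⁻¹ - α • Hi⁻¹).det ^ (-(1:ℝ)/2))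
      = ((2*Real.pi) ^ (-(N:ℝ)/2) * (2*Real.pi) ^ ((N:ℝ)/2))
        * ((ptj/pti) ^ α * (Hi.det/Hj.det) ^ (α/2))
        * (G.det ^ (-(1:ℝ)/2) * (G⁻¹ + α • Hj⁻¹ - α • Hi⁻¹).det ^ (-(1:ℝ)/2)) := by ring
    _ = (ptj/pti) ^ α * (Hi.det/Hj.det) ^ (α/2)
        * (G.det * (G⁻¹ + α • Hj⁻¹ - α • Hi⁻¹).det) ^ (-(1:ℝ)/2) := by
      rw [hcancel, hcomb]; ring
end

section
/- Let A', B', V be subspaces of ℝ^N and let c₀ > 0 be a real number such that ⟨x, (P_{A'} − P_{B'})x⟩ ≥ c₀‖x‖² for every x ∈ V. Then for every v ∈ V, every w ∈ (A')ᗮ ⊓ (B')ᗮ, and every z ∈ ℝ^N, setting x = v + w + z, one has ⟨x, (P_{A'} − P_{B'})x⟩ ≥ c₀‖v‖² − 2‖v‖·‖z‖ − ‖z‖². -/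
/-- The orthogonal projection onto a subspace `S`, viewed as an endomorphism. -/
noncomputable def projCLM {E : Type*} [NormedAddCommGroup E] [InnerProductSpace ℝ E]
    [FiniteDimensional ℝ E] (S : Submodule ℝ E) : E →L[ℝ] E :=
  S.subtypeL.comp S.orthogonalProjection

lemma projCLM_mem {E : Type*} [NormedAddCommGroup E] [InnerProductSpace ℝ E]
    [FiniteDimensional ℝ E] (S : Submodule ℝ E) (x : E) : projCLM S x ∈ S :=
  (S.orthogonalProjection x).2

lemma pythagoras_proj {E : Type*} [NormedAddCommGroup E] [InnerProductSpace ℝ E]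
    [FiniteDimensional ℝ E] (S : Submodule ℝ E) (x : E) :
    ‖projCLM S x‖ ^ 2 + ‖x - projCLM S x‖ ^ 2 = ‖x‖ ^ 2 := by
  have h0 : (inner ℝ (projCLM S x) (x - projCLM S x) : ℝ) = 0 := by
    rw [real_inner_comm]
    exact Submodule.starProjection_inner_eq_zero x _ (projCLM_mem S x)
  have := norm_add_sq_real (projCLM S x) (x - projCLM S x)
  rw [h0] at this
  simp only [mul_zero, add_zero] at this
  have hx : projCLM S x + (x - projCLM S x) = x := by abel
  rw [hx] at this
  linarith

lemma projCLM_norm_le {E : Type*} [NormedAddCommGroup E] [InnerProductSpace ℝ E]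
    [FiniteDimensional ℝ E] (S : Submodule ℝ E) (x : E) : ‖projCLM S x‖ ≤ ‖x‖ := by
  have := pythagoras_proj S x
  nlinarith [sq_nonneg ‖x - projCLM S x‖, norm_nonneg (projCLM S x), norm_nonneg x]

lemma sub_projCLM_norm_le {E : Type*} [NormedAddCommGroup E] [InnerProductSpace ℝ E]
    [FiniteDimensional ℝ E] (S : Submodule ℝ E) (x : E) : ‖x - projCLM S x‖ ≤ ‖x‖ := by
  have := pythagoras_proj S x
  nlinarith [sq_nonneg ‖projCLM S x‖, norm_nonneg (x - projCLM S x), norm_nonneg x]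

lemma proj_diff_norm_le {E : Type*} [NormedAddCommGroup E] [InnerProductSpace ℝ E]
    [FiniteDimensional ℝ E] (A B : Submodule ℝ E) (x : E) :
    ‖(projCLM A - projCLM B) x‖ ≤ ‖x‖ := by
  set y := projCLM B x with hy
  have hsplit : (projCLM A - projCLM B) x = projCLM A (x - y) + (projCLM A y - y) := by
    simp only [ContinuousLinearMap.sub_apply, map_sub]
    abel
  have key : (inner ℝ (y - projCLM A y) (projCLM A (x - y)) : ℝ) = 0 :=
    Submodule.starProjection_inner_eq_zero y _ (projCLM_mem A (x - y))
  have horth : (inner ℝ (projCLM A (x - y)) (projCLM A y - y) : ℝ) = 0 := by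
    rw [← neg_sub y (projCLM A y), inner_neg_right, real_inner_comm, key, neg_zero]
  have hpyth : ‖(projCLM A - projCLM B) x‖ ^ 2
      = ‖projCLM A (x - y)‖ ^ 2 + ‖projCLM A y - y‖ ^ 2 := by
    rw [hsplit, norm_add_sq_real, horth]; ring
  have h1 : ‖projCLM A (x - y)‖ ≤ ‖x - y‖ := projCLM_norm_le A (x - y)
  have h2 : ‖projCLM A y - y‖ ≤ ‖y‖ := by
    rw [← norm_neg, neg_sub]; exact sub_projCLM_norm_le A y
  have h3 : ‖x - y‖ ^ 2 + ‖y‖ ^ 2 = ‖x‖ ^ 2 := by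
    have := pythagoras_proj B x
    linarith
  have hsq : ‖(projCLM A - projCLM B) x‖ ^ 2 ≤ ‖x‖ ^ 2 := by
    rw [hpyth, ← h3]
    gcongr
  nlinarith [norm_nonneg ((projCLM A - projCLM B) x), norm_nonneg x]

/-- Lemma 4 in the Appendix of the paper: the lower bound (eq:ineq5) on
`⟨x, (P_{A'} − P_{B'})x⟩` for `x = v + w + z` with `v ∈ V`, `w ∈ (A')ᗮ ⊓ (B')ᗮ`. -/
theorem proj_difference_lower_bound
    (N : ℕ) (A' B' V : Submodule ℝ (EuclideanSpace ℝ (Fin N)))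
    (c₀ : ℝ) (hc₀ : 0 < c₀)
    (h : ∀ x ∈ V, c₀ * ‖x‖ ^ 2 ≤ (inner ℝ x ((projCLM A' - projCLM B') x) : ℝ)) :
    ∀ v ∈ V, ∀ w ∈ A'ᗮ ⊓ B'ᗮ, ∀ z : EuclideanSpace ℝ (Fin N),
      c₀ * ‖v‖ ^ 2 - 2 * ‖v‖ * ‖z‖ - ‖z‖ ^ 2
        ≤ (inner ℝ (v + w + z) ((projCLM A' - projCLM B') (v + w + z)) : ℝ) := by
  intro v hv w hw z
  set D := projCLM A' - projCLM B' with hD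
  have hwA : w ∈ A'ᗮ := hw.1
  have hwB : w ∈ B'ᗮ := hw.2
  have hPAw : projCLM A' w = 0 := by
    have := Submodule.orthogonalProjectionOnto_apply_of_mem_orthogonal hwA
    simp [projCLM, this]
  have hPBw : projCLM B' w = 0 := by
    have := Submodule.orthogonalProjectionOnto_apply_of_mem_orthogonal hwB
    simp [projCLM, this]
  have hDw : D w = 0 := by
    simp [hD, hPAw, hPBw]
  have hwD : ∀ y : EuclideanSpace ℝ (Fin N), (inner ℝ w (D y) : ℝ) = 0 := by
    intro y
    have h1 : (inner ℝ w (projCLM A' y) : ℝ) = 0 :=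
      Submodule.inner_left_of_mem_orthogonal (projCLM_mem A' y) hwA
    have h2 : (inner ℝ w (projCLM B' y) : ℝ) = 0 :=
      Submodule.inner_left_of_mem_orthogonal (projCLM_mem B' y) hwB
    simp [hD, inner_sub_right, h1, h2]
  have hDvz : D (v + w + z) = D v + D z := by
    rw [map_add, map_add, hDw]; abel
  have hexp : (inner ℝ (v + w + z) (D (v + w + z)) : ℝ)
      = inner ℝ v (D v) + inner ℝ v (D z) + inner ℝ z (D v) + inner ℝ z (D z) := by
    rw [hDvz, inner_add_left, inner_add_left, inner_add_right, inner_add_right,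
      inner_add_right, hwD v, hwD z]
    ring
  have hbase : c₀ * ‖v‖ ^ 2 ≤ (inner ℝ v (D v) : ℝ) := h v hv
  have hDz_le : ‖D z‖ ≤ ‖z‖ := proj_diff_norm_le A' B' z
  have hDv_le : ‖D v‖ ≤ ‖v‖ := proj_diff_norm_le A' B' v
  have h1 : (inner ℝ v (D z) : ℝ) ≥ -(‖v‖ * ‖z‖) := by
    have := abs_real_inner_le_norm v (D z)
    have h' : |(inner ℝ v (D z) : ℝ)| ≤ ‖v‖ * ‖z‖ :=
      this.trans (by gcongr)
    linarith [neg_abs_le (inner ℝ v (D z) : ℝ)]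
  have h2 : (inner ℝ z (D v) : ℝ) ≥ -(‖v‖ * ‖z‖) := by
    have := abs_real_inner_le_norm z (D v)
    have h' : |(inner ℝ z (D v) : ℝ)| ≤ ‖z‖ * ‖v‖ :=
      this.trans (by gcongr)
    have := neg_abs_le (inner ℝ z (D v) : ℝ)
    nlinarith
  have h3 : (inner ℝ z (D z) : ℝ) ≥ -(‖z‖ ^ 2) := by
    have := abs_real_inner_le_norm z (D z)
    have h' : |(inner ℝ z (D z) : ℝ)| ≤ ‖z‖ * ‖z‖ :=
      this.trans (by gcongr)
    have := neg_abs_le (inner ℝ z (D z) : ℝ)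
    nlinarith
  rw [hexp]
  nlinarith
end

section
/- Let K be a real symmetric positive semidefinite N×N matrix of rank r, and let L : (0,∞) → ℝ^{N×N} be a family of real symmetric matrices with L(t) → L⁰ as t → ∞. Then: (a) if r = N, lim_{t→∞} t^{−N} det(L(t) + t·K) = det K; (b) if r < N and U^⊥ ∈ ℝ^{N×(N−r)} is any matrix whose columns form an orthonormal basis of ker K, then lim_{t→∞} t^{−r} det(L(t) + t·K) = pdet(K) · det((U^⊥)ᵀ L⁰ U^⊥), where pdet(K) denotes the product of the nonzero (i.e. positive) eigenvalues of K. -/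
open Matrix Filter

/-- The pseudo-determinant of a Hermitian real matrix: the product of its nonzero
eigenvalues. -/
noncomputable def pdet {N : ℕ} (K : Matrix (Fin N) (Fin N) ℝ) (hK : K.IsHermitian) : ℝ :=
  ∏ i ∈ Finset.univ.filter (fun i => hK.eigenvalues i ≠ 0), hK.eigenvalues i

/-- The limiting matrix restricted to the kernel eigendirections. -/
noncomputable def kerMat {N : ℕ} (K : Matrix (Fin N) (Fin N) ℝ) (hH : K.IsHermitian)
    (L0 : Matrix (Fin N) (Fin N) ℝ) :
    Matrix {i : Fin N // ¬ hH.eigenvalues i ≠ 0} {i : Fin N // ¬ hH.eigenvalues i ≠ 0} ℝ :=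
  Matrix.of fun i j =>
    (star (hH.eigenvectorUnitary : Matrix (Fin N) (Fin N) ℝ) * L0 *
      (hH.eigenvectorUnitary : Matrix (Fin N) (Fin N) ℝ)) i.1 j.1

theorem tendsto_det_div {N : ℕ} (K : Matrix (Fin N) (Fin N) ℝ) (hK : K.PosSemidef)
    (r : ℕ) (hr : K.rank = r)
    (L : ℝ → Matrix (Fin N) (Fin N) ℝ) (L0 : Matrix (Fin N) (Fin N) ℝ)
    (hL : Tendsto L atTop (nhds L0)) :
    Tendsto (fun t : ℝ => (L t + t • K).det / t ^ r) atTop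
      (nhds (pdet K hK.1 * (kerMat K hK.1 L0).det)) := by
  classical
  set U : Matrix (Fin N) (Fin N) ℝ := (hK.1.eigenvectorUnitary : Matrix (Fin N) (Fin N) ℝ)
    with hU
  set lam : Fin N → ℝ := hK.1.eigenvalues with hlam
  have hU1 : star U * U = 1 := Unitary.coe_star_mul_self _
  have hU2 : U * star U = 1 := Unitary.coe_mul_star_self _
  have hdiag : star U * K * U = diagonal lam := by
    simpa [Unitary.conjStarAlgAut_apply] using hK.1.conjStarAlgAut_star_eigenvectorUnitary
  have hcard : (Finset.univ.filter fun i => lam i ≠ 0).card = r := by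
    have h1 := hK.1.rank_eq_card_non_zero_eigs
    rw [hr, Fintype.card_subtype] at h1
    exact h1.symm
  set M : ℝ → Matrix (Fin N) (Fin N) ℝ := fun t => star U * L t * U with hM
  set M0 : Matrix (Fin N) (Fin N) ℝ := star U * L0 * U with hM0
  have hMtend : Tendsto M atTop (nhds M0) := by
    have hc : Continuous fun X : Matrix (Fin N) (Fin N) ℝ => star U * X * U :=
      (continuous_const.matrix_mul continuous_id).matrix_mul continuous_const
    exact (hc.tendsto L0).comp hL
  have hMij : ∀ i j, Tendsto (fun t => M t i j) atTop (nhds (M0 i j)) := by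
    intro i j
    exact (((continuous_apply j).comp (continuous_apply i)).tendsto M0).comp hMtend
  set d : ℝ → Fin N → ℝ := fun t i => if lam i ≠ 0 then t⁻¹ else 1 with hd
  set G : ℝ → Matrix (Fin N) (Fin N) ℝ := fun t => diagonal (d t) * (M t + t • diagonal lam)
    with hG
  set B : Matrix (Fin N) (Fin N) ℝ :=
    Matrix.of fun i j => if lam i ≠ 0 then diagonal lam i j else M0 i j with hB
  have hGtend : Tendsto G atTop (nhds B) := by
    apply tendsto_pi_nhds.mpr
    intro i
    rw [tendsto_pi_nhds]
    intro j
    by_cases hpi : lam i ≠ 0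
    · have hev : (fun t : ℝ => t⁻¹ * M t i j + diagonal lam i j) =ᶠ[atTop]
          fun t => G t i j := by
        filter_upwards [eventually_ne_atTop (0 : ℝ)] with t ht
        simp only [hG, Matrix.diagonal_mul, Matrix.add_apply, Matrix.smul_apply, smul_eq_mul,
          hd, if_pos hpi]
        field_simp
      have hlim : Tendsto (fun t : ℝ => t⁻¹ * M t i j + diagonal lam i j) atTop
          (nhds (0 * M0 i j + diagonal lam i j)) :=
        (tendsto_inv_atTop_zero.mul (hMij i j)).add tendsto_const_nhds
      rw [zero_mul, zero_add] at hlim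
      have hBij : B i j = diagonal lam i j := by simp only [hB, Matrix.of_apply, if_pos hpi]
      rw [hBij]
      exact Filter.Tendsto.congr' hev hlim
    · have hlam0 : lam i = 0 := not_not.mp hpi
      have hdl : diagonal lam i j = 0 := by
        by_cases h : i = j
        · subst h; simp [hlam0]
        · simp [Matrix.diagonal_apply_ne _ h]
      have heq : (fun t : ℝ => G t i j) = fun t => M t i j := by
        funext t
        simp only [hG, Matrix.diagonal_mul, Matrix.add_apply, Matrix.smul_apply, smul_eq_mul,
          hd, if_neg hpi, one_mul, hdl, mul_zero, add_zero]
      have hBij : B i j = M0 i j := by simp only [hB, Matrix.of_apply, if_neg hpi]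
      rw [hBij, heq]
      exact hMij i j
  have hev : (fun t : ℝ => (G t).det) =ᶠ[atTop] fun t => (L t + t • K).det / t ^ r := by
    filter_upwards [eventually_gt_atTop (0 : ℝ)] with t ht
    have hconj : star U * (L t + t • K) * U = M t + t • diagonal lam := by
      rw [Matrix.mul_add, Matrix.add_mul, Matrix.mul_smul, Matrix.smul_mul, hdiag, hM]
    have hdet1 : (G t).det = (∏ i, d t i) * (M t + t • diagonal lam).det := by
      simp only [hG]
      rw [det_mul, det_diagonal]
    have hprod : (∏ i, d t i) = (t ^ r)⁻¹ := by
      simp only [hd]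
      rw [Finset.prod_ite, Finset.prod_const, Finset.prod_const, one_pow, mul_one, hcard,
        ← inv_pow]
    have hdet2 : (M t + t • diagonal lam).det = (L t + t • K).det := by
      rw [← hconj, det_mul, det_mul, mul_comm (det (star U)), mul_assoc, ← det_mul, hU1,
        det_one, mul_one]
    rw [hdet1, hprod, hdet2, div_eq_mul_inv, mul_comm]
  have hdetB : Tendsto (fun t : ℝ => (L t + t • K).det / t ^ r) atTop (nhds B.det) := by
    have h1 := (Continuous.matrix_det continuous_id).tendsto B
    exact Filter.Tendsto.congr' hev (h1.comp hGtend)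
  have hBdet : B.det = pdet K hK.1 * (kerMat K hK.1 L0).det := by
    set e := Equiv.sumCompl (fun i => lam i ≠ 0) with he
    have hsub : B.submatrix e e =
        Matrix.fromBlocks (diagonal fun i : {i : Fin N // lam i ≠ 0} => lam i.1) 0
          (Matrix.of fun (i : {i : Fin N // ¬ lam i ≠ 0}) (j : {i : Fin N // lam i ≠ 0}) =>
            M0 i.1 j.1)
          (kerMat K hK.1 L0) := by
      ext i j
      cases i with
      | inl a =>
        cases j with
        | inl b =>
          simp only [Matrix.submatrix_apply, he, Equiv.sumCompl_apply_inl, hB, Matrix.of_apply,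
            if_pos a.2, Matrix.fromBlocks_apply₁₁]
          by_cases hab : a = b
          · subst hab; simp
          · rw [Matrix.diagonal_apply_ne _ (fun h => hab (Subtype.ext h)),
              Matrix.diagonal_apply_ne _ hab]
        | inr b =>
          simp only [Matrix.submatrix_apply, he, Equiv.sumCompl_apply_inl,
            Equiv.sumCompl_apply_inr, hB, Matrix.of_apply, if_pos a.2,
            Matrix.fromBlocks_apply₁₂, Matrix.zero_apply]
          exact Matrix.diagonal_apply_ne _ (fun h => b.2 (h ▸ a.2))
      | inr a =>
        cases j with
        | inl b =>
          simp only [Matrix.submatrix_apply, he, Equiv.sumCompl_apply_inl,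
            Equiv.sumCompl_apply_inr, hB, Matrix.of_apply, if_neg a.2,
            Matrix.fromBlocks_apply₂₁]
        | inr b =>
          simp only [Matrix.submatrix_apply, he, Equiv.sumCompl_apply_inr, hB, Matrix.of_apply,
            if_neg a.2, Matrix.fromBlocks_apply₂₂, kerMat, hM0, hU]
    rw [← Matrix.det_submatrix_equiv_self e B, hsub, Matrix.det_fromBlocks_zero₁₂,
      det_diagonal]
    congr 1
    unfold pdet
    rw [← hlam]
    exact (Finset.prod_subtype _ (fun x => by simp) _).symm
  rw [← hBdet]
  exact hdetB

theorem kerMat_det_eq {N : ℕ} (K : Matrix (Fin N) (Fin N) ℝ) (hK : K.PosSemidef)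
    (r : ℕ) (hr : K.rank = r) (L0 : Matrix (Fin N) (Fin N) ℝ)
    (Uperp : Matrix (Fin N) (Fin (N - r)) ℝ)
    (hUo : Uperpᵀ * Uperp = 1) (hKU : K * Uperp = 0) :
    (Uperpᵀ * L0 * Uperp).det = (kerMat K hK.1 L0).det := by
  classical
  set U : Matrix (Fin N) (Fin N) ℝ := (hK.1.eigenvectorUnitary : Matrix (Fin N) (Fin N) ℝ)
    with hU
  set lam : Fin N → ℝ := hK.1.eigenvalues with hlam
  have hU1 : star U * U = 1 := Unitary.coe_star_mul_self _
  have hU2 : U * star U = 1 := Unitary.coe_mul_star_self _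
  have hdiag : star U * K * U = diagonal lam := by
    simpa [Unitary.conjStarAlgAut_apply] using hK.1.conjStarAlgAut_star_eigenvectorUnitary
  have hcard : Fintype.card {i : Fin N // ¬ lam i ≠ 0} = N - r := by
    rw [Fintype.card_subtype_compl, Fintype.card_fin, ← hK.1.rank_eq_card_non_zero_eigs, hr]
  set e2 : Fin (N - r) ≃ {i : Fin N // ¬ lam i ≠ 0} := (Fintype.equivFinOfCardEq hcard).symm
    with he2
  set W : Matrix (Fin N) (Fin (N - r)) ℝ := Matrix.of fun i a => U i (e2 a).1 with hW
  have hWW : Wᵀ * W = 1 := by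
    ext a b
    have h1 : (star U * U) (e2 a).1 (e2 b).1 = (1 : Matrix (Fin N) (Fin N) ℝ) (e2 a).1 (e2 b).1 := by
      rw [hU1]
    rw [Matrix.mul_apply] at h1
    simp only [Matrix.star_apply, star_trivial] at h1
    rw [Matrix.mul_apply]
    simp only [hW, Matrix.of_apply, Matrix.transpose_apply]
    rw [h1]
    by_cases hab : a = b
    · subst hab; simp
    · rw [Matrix.one_apply_ne (fun h => hab (e2.injective (Subtype.ext h))),
        Matrix.one_apply_ne hab]
  set c : Matrix (Fin N) (Fin (N - r)) ℝ := star U * Uperp with hc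
  have hdc : diagonal lam * c = 0 := by
    have h3 : U * (star U * Uperp) = Uperp := by rw [← Matrix.mul_assoc, hU2, Matrix.one_mul]
    have h4 : diagonal lam * c = star U * (K * Uperp) := by
      rw [hc, ← hdiag, Matrix.mul_assoc, Matrix.mul_assoc, h3, ← Matrix.mul_assoc]
    rw [h4, hKU, Matrix.mul_zero]
  have hcvanish : ∀ i, lam i ≠ 0 → ∀ b, c i b = 0 := by
    intro i hi b
    have h : (diagonal lam * c) i b = (0 : Matrix (Fin N) (Fin (N - r)) ℝ) i b := by rw [hdc]
    rw [Matrix.diagonal_mul, Matrix.zero_apply] at h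
    exact (mul_eq_zero.mp h).resolve_left hi
  have hUperp_eq : Uperp = U * c := by
    rw [hc, ← Matrix.mul_assoc, hU2, Matrix.one_mul]
  set O : Matrix (Fin (N - r)) (Fin (N - r)) ℝ := Wᵀ * Uperp with hO
  have hOc : ∀ a b, O a b = c (e2 a).1 b := by
    intro a b
    rw [hO, Matrix.mul_apply, hc, Matrix.mul_apply]
    simp only [hW, Matrix.of_apply, Matrix.transpose_apply, Matrix.star_apply, star_trivial]
  have hWO : W * O = Uperp := by
    ext i b
    rw [Matrix.mul_apply]
    have h1 : ∀ a, W i a * O a b = U i (e2 a).1 * c (e2 a).1 b := by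
      intro a; rw [hOc]; simp [hW]
    rw [Finset.sum_congr rfl (fun a _ => h1 a)]
    rw [Equiv.sum_comp e2 (fun s : {i : Fin N // ¬ lam i ≠ 0} => U i s.1 * c s.1 b)]
    rw [hUperp_eq, Matrix.mul_apply]
    rw [← Finset.sum_subtype (Finset.univ.filter fun k => ¬ lam k ≠ 0) (by simp)
      (fun k => U i k * c k b)]
    refine Finset.sum_subset (Finset.filter_subset _ _) ?_
    intro k _ hk
    simp only [Finset.mem_filter, Finset.mem_univ, true_and, not_not] at hk
    rw [hcvanish k hk b, mul_zero]
  have hOO : Oᵀ * O = 1 := by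
    have h5 : Oᵀ * (Wᵀ * W) * O = (W * O)ᵀ * (W * O) := by
      rw [Matrix.transpose_mul W O]
      simp only [Matrix.mul_assoc]
    have h6 : Oᵀ * (Wᵀ * W) * O = 1 := by rw [h5, hWO, hUo]
    rwa [hWW, Matrix.mul_one] at h6
  have hdetO : O.det * O.det = 1 := by
    have h7 := congrArg Matrix.det hOO
    rwa [Matrix.det_mul, Matrix.det_transpose, Matrix.det_one] at h7
  have hmid : Wᵀ * L0 * W = (kerMat K hK.1 L0).submatrix e2 e2 := by
    ext a b
    simp only [kerMat, Matrix.submatrix_apply, Matrix.of_apply, ← hU]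
    simp only [Matrix.mul_apply, hW, Matrix.of_apply, Matrix.transpose_apply,
      Matrix.star_apply, star_trivial]
  calc (Uperpᵀ * L0 * Uperp).det = (Oᵀ * (Wᵀ * L0 * W) * O).det := by
        rw [← hWO]
        congr 1
        rw [Matrix.transpose_mul W O]
        simp only [Matrix.mul_assoc]
    _ = (Wᵀ * L0 * W).det * (O.det * O.det) := by
        rw [Matrix.det_mul, Matrix.det_mul, Matrix.det_transpose]; ring
    _ = (Wᵀ * L0 * W).det := by rw [hdetO, mul_one]
    _ = (kerMat K hK.1 L0).det := by rw [hmid, Matrix.det_submatrix_equiv_self]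

/-- Lemma 8 in the Appendix of the paper: the determinant asymptotics
`det(L(t) + t·K) ~ t^{rank K} · pdet(K) · det((U^⊥)ᵀ L⁰ U^⊥)` as `t → ∞`, underlying the
low-noise expansion of Theorem 2 (there `t = 1/σ²`). -/
theorem det_asymptotics
    (N : ℕ) (K : Matrix (Fin N) (Fin N) ℝ) (hK : K.PosSemidef)
    (r : ℕ) (hr : K.rank = r)
    (L : ℝ → Matrix (Fin N) (Fin N) ℝ) (hLsymm : ∀ t > (0 : ℝ), (L t).IsSymm)
    (L0 : Matrix (Fin N) (Fin N) ℝ)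
    (hL : Tendsto L atTop (nhds L0)) :
    (r = N →
      Tendsto (fun t : ℝ => (L t + t • K).det / t ^ N) atTop (nhds K.det)) ∧
    (r < N →
      ∀ Uperp : Matrix (Fin N) (Fin (N - r)) ℝ,
        Uperpᵀ * Uperp = 1 → K * Uperp = 0 →
        Tendsto (fun t : ℝ => (L t + t • K).det / t ^ r) atTop
          (nhds (pdet K hK.1 * (Uperpᵀ * L0 * Uperp).det))) := by
  classical
  constructor
  · intro hrN
    subst hrN
    have hmain := tendsto_det_div K hK r hr L L0 hL
    have hempty : IsEmpty {i : Fin r // ¬ hK.1.eigenvalues i ≠ 0} := by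
      rw [← Fintype.card_eq_zero_iff]
      rw [Fintype.card_subtype_compl, Fintype.card_fin, ← hK.1.rank_eq_card_non_zero_eigs, hr,
        Nat.sub_self]
    have h1 : (kerMat K hK.1 L0).det = 1 := by
      haveI := hempty
      exact Matrix.det_isEmpty
    have h2 : pdet K hK.1 = K.det := by
      have hall : ∀ i : Fin r, hK.1.eigenvalues i ≠ 0 := fun i => by
        by_contra h
        exact hempty.false ⟨i, fun hne => hne h⟩
      unfold pdet
      rw [Finset.filter_true_of_mem (fun i _ => hall i)]
      simpa using hK.1.det_eq_prod_eigenvalues.symm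
    rw [← h2, ← mul_one (pdet K hK.1), ← h1]
    exact hmain
  · intro _ Uperp hUo hKU
    have hmain := tendsto_det_div K hK r hr L L0 hL
    rw [kerMat_det_eq K hK r hr L0 Uperp hUo hKU]
    exact hmain
end

section
/- Let N, r_1, r_2 ∈ ℕ, let U_1 ∈ ℝ^{N×r_1} and U_2 ∈ ℝ^{N×r_2} have orthonormal columns, and let Q_1, Q_2 ∈ ℝ^{N×N} be orthogonal matrices. Set Ũ_1 = Q_1U_1, Ũ_2 = Q_2U_2, ε_1 = ‖I − Q_1‖₂, ε_2 = ‖I − Q_2‖₂ and δ_12 = ‖U_1ᵀU_2‖₂. If 1 − δ_12 > ε_1 + ε_2, then both U_1ᵀ(Ũ_1Ũ_1ᵀ − Ũ_2Ũ_2ᵀ)U_1 and U_2ᵀ(Ũ_2Ũ_2ᵀ − Ũ_1Ũ_1ᵀ)U_2 are positive definite. -/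
open Matrix
open scoped Matrix.Norms.L2Operator

section Aux

private lemma dot_self_eq_norm_sq (n : ℕ) (v : Fin n → ℝ) :
    v ⬝ᵥ v = ‖(EuclideanSpace.equiv (Fin n) ℝ).symm v‖ ^ 2 := by
  rw [← real_inner_self_eq_norm_sq]
  rw [PiLp.inner_apply]
  simp [dotProduct, sq]

private lemma mulVec_norm_le' (m n : ℕ) (A : Matrix (Fin m) (Fin n) ℝ) (v : Fin n → ℝ) :
    ‖(EuclideanSpace.equiv (Fin m) ℝ).symm (A *ᵥ v)‖
      ≤ ‖A‖ * ‖(EuclideanSpace.equiv (Fin n) ℝ).symm v‖ :=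
  A.l2_opNorm_mulVec _

private lemma norm_one_le' (r : ℕ) : ‖(1 : Matrix (Fin r) (Fin r) ℝ)‖ ≤ 1 := by
  have h : ‖(1 : Matrix (Fin r) (Fin r) ℝ)ᴴ * 1‖ = ‖(1 : Matrix (Fin r) (Fin r) ℝ)‖ * ‖(1 : Matrix (Fin r) (Fin r) ℝ)‖ :=
    Matrix.l2_opNorm_conjTranspose_mul_self _
  simp only [conjTranspose_one, one_mul] at h
  nlinarith [norm_nonneg (1 : Matrix (Fin r) (Fin r) ℝ)]

private lemma norm_U_le_one (N r : ℕ) (U : Matrix (Fin N) (Fin r) ℝ) (hU : Uᵀ * U = 1) :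
    ‖U‖ ≤ 1 := by
  have h : ‖Uᴴ * U‖ = ‖U‖ * ‖U‖ := Matrix.l2_opNorm_conjTranspose_mul_self U
  rw [U.conjTranspose_eq_transpose_of_trivial, hU] at h
  nlinarith [norm_nonneg U, norm_one_le' r]

private lemma norm_transpose' (m n : ℕ) (A : Matrix (Fin m) (Fin n) ℝ) : ‖Aᵀ‖ = ‖A‖ := by
  rw [← A.conjTranspose_eq_transpose_of_trivial]
  exact A.l2_opNorm_conjTranspose

private lemma quad_eq (m n : ℕ) (A : Matrix (Fin m) (Fin n) ℝ) (x : Fin n → ℝ) :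
    x ⬝ᵥ ((Aᵀ * A) *ᵥ x) = (A *ᵥ x) ⬝ᵥ (A *ᵥ x) := by
  rw [← mulVec_mulVec, dotProduct_mulVec, vecMul_transpose]

private lemma aux_posdef (N r1 r2 : ℕ)
    (U1 : Matrix (Fin N) (Fin r1) ℝ) (U2 : Matrix (Fin N) (Fin r2) ℝ)
    (hU1 : U1ᵀ * U1 = 1) (hU2 : U2ᵀ * U2 = 1)
    (Q1 Q2 : Matrix (Fin N) (Fin N) ℝ)
    (h : ‖(1 : Matrix (Fin N) (Fin N) ℝ) - Q1‖ + ‖(1 : Matrix (Fin N) (Fin N) ℝ) - Q2‖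
        < 1 - ‖U1ᵀ * U2‖) :
    (U1ᵀ * ((Q1 * U1) * (Q1 * U1)ᵀ - (Q2 * U2) * (Q2 * U2)ᵀ) * U1).PosDef := by
  set ε1 := ‖(1 : Matrix (Fin N) (Fin N) ℝ) - Q1‖ with hε1
  set ε2 := ‖(1 : Matrix (Fin N) (Fin N) ℝ) - Q2‖ with hε2
  set δ := ‖U1ᵀ * U2‖ with hδ
  have hε1n : 0 ≤ ε1 := norm_nonneg _
  have hε2n : 0 ≤ ε2 := norm_nonneg _
  have hδn : 0 ≤ δ := norm_nonneg _
  rw [posDef_iff_dotProduct_mulVec]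
  constructor
  · show _ = _
    simp [conjTranspose_eq_transpose_of_trivial, transpose_mul, sub_mul, mul_sub,
      Matrix.mul_assoc]
  · intro x hx
    -- rewrite the quadratic form
    set A1 : Matrix (Fin r1) (Fin r1) ℝ := ((Q1 * U1)ᵀ * U1) with hA1
    set A2 : Matrix (Fin r2) (Fin r1) ℝ := ((Q2 * U2)ᵀ * U1) with hA2
    have key : star x ⬝ᵥ ((U1ᵀ * ((Q1 * U1) * (Q1 * U1)ᵀ - (Q2 * U2) * (Q2 * U2)ᵀ) * U1) *ᵥ x)
        = (A1 *ᵥ x) ⬝ᵥ (A1 *ᵥ x) - (A2 *ᵥ x) ⬝ᵥ (A2 *ᵥ x) := by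
      have e1 : U1ᵀ * ((Q1 * U1) * (Q1 * U1)ᵀ) * U1 = A1ᵀ * A1 := by
        simp [hA1, transpose_mul, transpose_transpose, Matrix.mul_assoc]
      have e2 : U1ᵀ * ((Q2 * U2) * (Q2 * U2)ᵀ) * U1 = A2ᵀ * A2 := by
        simp [hA2, transpose_mul, transpose_transpose, Matrix.mul_assoc]
      have : U1ᵀ * ((Q1 * U1) * (Q1 * U1)ᵀ - (Q2 * U2) * (Q2 * U2)ᵀ) * U1
          = A1ᵀ * A1 - A2ᵀ * A2 := by
        rw [← e1, ← e2, Matrix.mul_sub, Matrix.sub_mul]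
      rw [this, Matrix.sub_mulVec, dotProduct_sub, star_trivial, quad_eq, quad_eq]
    rw [key]
    -- norms
    set t := ‖(EuclideanSpace.equiv (Fin r1) ℝ).symm x‖ with ht
    have htpos : 0 < t := by
      rw [ht, norm_pos_iff]
      simpa using hx
    -- A1 = 1 - E
    set E : Matrix (Fin r1) (Fin r1) ℝ := U1ᵀ * ((1 : Matrix (Fin N) (Fin N) ℝ) - Q1)ᵀ * U1 with hE
    have hA1E : A1 = 1 - E := by
      rw [hE, transpose_sub, transpose_one, Matrix.mul_sub, Matrix.sub_mul, Matrix.mul_one, hU1]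
      rw [hA1, transpose_mul]
      rw [Matrix.mul_assoc, sub_sub_cancel]
    have hEnorm : ‖E‖ ≤ ε1 := by
      calc ‖E‖ ≤ ‖U1ᵀ * ((1 : Matrix (Fin N) (Fin N) ℝ) - Q1)ᵀ‖ * ‖U1‖ :=
            Matrix.l2_opNorm_mul _ _
        _ ≤ ‖U1ᵀ‖ * ‖((1 : Matrix (Fin N) (Fin N) ℝ) - Q1)ᵀ‖ * ‖U1‖ := by
            gcongr; exact Matrix.l2_opNorm_mul _ _
        _ ≤ 1 * ε1 * 1 := by
            have h1 : ‖U1ᵀ‖ ≤ 1 := by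
              rw [norm_transpose']; exact norm_U_le_one N r1 U1 hU1
            have h2 : ‖((1 : Matrix (Fin N) (Fin N) ℝ) - Q1)ᵀ‖ = ε1 := norm_transpose' _ _ _
            have h3 : ‖U1‖ ≤ 1 := norm_U_le_one N r1 U1 hU1
            rw [h2]
            exact mul_le_mul (mul_le_mul h1 le_rfl hε1n zero_le_one) h3
              (norm_nonneg _) (by linarith)
        _ = ε1 := by ring
    have hA2norm : ‖A2‖ ≤ δ + ε2 := by
      have hA2' : A2 = U2ᵀ * U1 - U2ᵀ * ((1 : Matrix (Fin N) (Fin N) ℝ) - Q2)ᵀ * U1 := by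
        rw [hA2, transpose_mul, transpose_sub, transpose_one, Matrix.mul_sub, Matrix.sub_mul,
          Matrix.mul_one, Matrix.mul_assoc, sub_sub_cancel]
      rw [hA2']
      have hd : ‖U2ᵀ * U1‖ = δ := by
        rw [hδ, ← norm_transpose' _ _ (U1ᵀ * U2), transpose_mul, transpose_transpose]
      have h2 : ‖U2ᵀ * ((1 : Matrix (Fin N) (Fin N) ℝ) - Q2)ᵀ * U1‖ ≤ ε2 := by
        calc ‖U2ᵀ * ((1 : Matrix (Fin N) (Fin N) ℝ) - Q2)ᵀ * U1‖
            ≤ ‖U2ᵀ * ((1 : Matrix (Fin N) (Fin N) ℝ) - Q2)ᵀ‖ * ‖U1‖ := Matrix.l2_opNorm_mul _ _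
          _ ≤ ‖U2ᵀ‖ * ‖((1 : Matrix (Fin N) (Fin N) ℝ) - Q2)ᵀ‖ * ‖U1‖ := by
              gcongr; exact Matrix.l2_opNorm_mul _ _
          _ ≤ 1 * ε2 * 1 := by
              have hu2 : ‖U2ᵀ‖ ≤ 1 := by
                rw [norm_transpose']; exact norm_U_le_one N r2 U2 hU2
              have he : ‖((1 : Matrix (Fin N) (Fin N) ℝ) - Q2)ᵀ‖ = ε2 := norm_transpose' _ _ _
              have hu1 : ‖U1‖ ≤ 1 := norm_U_le_one N r1 U1 hU1
              rw [he]
              exact mul_le_mul (mul_le_mul hu2 le_rfl hε2n zero_le_one) hu1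
                (norm_nonneg _) (by linarith)
          _ = ε2 := by ring
      calc ‖U2ᵀ * U1 - U2ᵀ * ((1 : Matrix (Fin N) (Fin N) ℝ) - Q2)ᵀ * U1‖
          ≤ ‖U2ᵀ * U1‖ + ‖U2ᵀ * ((1 : Matrix (Fin N) (Fin N) ℝ) - Q2)ᵀ * U1‖ := norm_sub_le _ _
        _ ≤ δ + ε2 := by rw [hd]; linarith
    -- lower bound on n1
    set n1 := ‖(EuclideanSpace.equiv (Fin r1) ℝ).symm (A1 *ᵥ x)‖ with hn1
    set n2 := ‖(EuclideanSpace.equiv (Fin r2) ℝ).symm (A2 *ᵥ x)‖ with hn2d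
    have hn1lb : (1 - ε1) * t ≤ n1 := by
      have hv : A1 *ᵥ x = x - E *ᵥ x := by
        rw [hA1E, Matrix.sub_mulVec, Matrix.one_mulVec]
      have hEx : ‖(EuclideanSpace.equiv (Fin r1) ℝ).symm (E *ᵥ x)‖ ≤ ε1 * t := by
        calc ‖(EuclideanSpace.equiv (Fin r1) ℝ).symm (E *ᵥ x)‖
            ≤ ‖E‖ * t := mulVec_norm_le' r1 r1 E x
          _ ≤ ε1 * t := by gcongr
      have : n1 = ‖(EuclideanSpace.equiv (Fin r1) ℝ).symm x
          - (EuclideanSpace.equiv (Fin r1) ℝ).symm (E *ᵥ x)‖ := by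
        rw [hn1, hv, map_sub]
      rw [this]
      have := norm_sub_norm_le ((EuclideanSpace.equiv (Fin r1) ℝ).symm x)
        ((EuclideanSpace.equiv (Fin r1) ℝ).symm (E *ᵥ x))
      have habs : t - ε1 * t ≤ ‖(EuclideanSpace.equiv (Fin r1) ℝ).symm x
          - (EuclideanSpace.equiv (Fin r1) ℝ).symm (E *ᵥ x)‖ := by
        have := abs_norm_sub_norm_le ((EuclideanSpace.equiv (Fin r1) ℝ).symm x)
          ((EuclideanSpace.equiv (Fin r1) ℝ).symm (E *ᵥ x))
        have h' := (abs_le.mp this).2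
        linarith [h', hEx]
      linarith [habs]
    have hn2ub : n2 ≤ (δ + ε2) * t := by
      calc n2 ≤ ‖A2‖ * t := mulVec_norm_le' r2 r1 A2 x
        _ ≤ (δ + ε2) * t := by gcongr
    have hd1 : (A1 *ᵥ x) ⬝ᵥ (A1 *ᵥ x) = n1 ^ 2 := dot_self_eq_norm_sq r1 _
    have hd2 : (A2 *ᵥ x) ⬝ᵥ (A2 *ᵥ x) = n2 ^ 2 := dot_self_eq_norm_sq r2 _
    rw [hd1, hd2]
    have hlt : n2 < n1 := by
      have : (δ + ε2) * t < (1 - ε1) * t := by nlinarith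
      linarith
    have hn2nn : 0 ≤ n2 := norm_nonneg _
    nlinarith

end Aux

/-- Example 3 of the paper: if the mismatched subspaces are rotated versions
`Ũ_i = Q_iU_i` of the true subspaces, and `1 − δ_12 > ε_1 + ε_2` where
`ε_i = ‖I − Q_i‖₂` and `δ_12 = ‖U_1ᵀU_2‖₂` (spectral norms), then the principal-angle
conditions of Corollary 2 hold, i.e. `U_iᵀ(Ũ_iŨ_iᵀ − Ũ_jŨ_jᵀ)U_i ≻ 0` for both classes. -/
theorem rotated_mismatch_posdef
    (N r1 r2 : ℕ)
    (U1 : Matrix (Fin N) (Fin r1) ℝ) (U2 : Matrix (Fin N) (Fin r2) ℝ)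
    (hU1 : U1ᵀ * U1 = 1) (hU2 : U2ᵀ * U2 = 1)
    (Q1 Q2 : Matrix (Fin N) (Fin N) ℝ)
    (hQ1 : Q1ᵀ * Q1 = 1) (hQ2 : Q2ᵀ * Q2 = 1)
    (h : ‖(1 : Matrix (Fin N) (Fin N) ℝ) - Q1‖ + ‖(1 : Matrix (Fin N) (Fin N) ℝ) - Q2‖
        < 1 - ‖U1ᵀ * U2‖) :
    (U1ᵀ * ((Q1 * U1) * (Q1 * U1)ᵀ - (Q2 * U2) * (Q2 * U2)ᵀ) * U1).PosDef ∧
    (U2ᵀ * ((Q2 * U2) * (Q2 * U2)ᵀ - (Q1 * U1) * (Q1 * U1)ᵀ) * U2).PosDef := by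
  have hsymm : ‖U2ᵀ * U1‖ = ‖U1ᵀ * U2‖ := by
    rw [← Matrix.l2_opNorm_conjTranspose (U1ᵀ * U2),
      conjTranspose_eq_transpose_of_trivial, transpose_mul, transpose_transpose]
  refine ⟨aux_posdef N r1 r2 U1 U2 hU1 hU2 Q1 Q2 h, aux_posdef N r2 r1 U2 U1 hU2 hU1 Q2 Q1 ?_⟩
  rw [hsymm]
  linarith
end
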